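/- The value of the program FullOp, namely the infimum over pairs (μ, ν) of Borel probability measures on [0,∞) with ∫∫ max(x,y) dν(y) dμ(x) ≥ 1 of the quantity sup_{t ≥ 0} [ ∫ x dμ(x) + ∫∫ (y − x)·1{x ≤ t ≤ y} dν(y) dμ(x) ], is equal to the tight worst-case approximation ratio of fixed-price mechanisms, i.e. equal to the infimum over instances I = (F_S, F_B) with 0 < OPT(I) < ∞ of sup_{p ≥ 0} W(I,p) / OPT(I). -/

import Mathlib

open MeasureTheory

/-- Expected welfare of the fixed price `p` on the bilateral-trade instance `(μ, ν)`. -/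
noncomputable def welfare (μ ν : Measure ℝ) (p : ℝ) : ℝ :=
  ∫ z : ℝ × ℝ, (z.1 + if z.1 ≤ p ∧ p ≤ z.2 then z.2 - z.1 else 0) ∂(μ.prod ν)

/-- Optimal welfare `OPT(I) = E[max(S,B)]`. -/
noncomputable def optWelfare (μ ν : Measure ℝ) : ℝ :=
  ∫ z : ℝ × ℝ, max z.1 z.2 ∂(μ.prod ν)

/-- The value of the program `FullOp`: the infimum, over pairs `(μ, ν)` of Borel
probability measures on `[0,∞)` with `∫∫ max(x,y) ≥ 1`, of
`sup_{t ≥ 0} W((μ,ν), t)` (encoded as the infimum of all `r` bounding all the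
welfare values `W((μ,ν), t)`, `t ≥ 0`, for some feasible `(μ, ν)`). -/
noncomputable def fullOpValue : ℝ :=
  sInf { r : ℝ | ∃ μ ν : Measure ℝ, IsProbabilityMeasure μ ∧ IsProbabilityMeasure ν ∧
    μ (Set.Iio 0) = 0 ∧ ν (Set.Iio 0) = 0 ∧
    1 ≤ optWelfare μ ν ∧
    ∀ t : ℝ, 0 ≤ t → welfare μ ν t ≤ r }

/-- The tight worst-case approximation ratio of fixed-price mechanisms:
the infimum over instances `I` with `0 < OPT(I) < ∞` of `sup_{p ≥ 0} W(I,p)/OPT(I)`. -/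
noncomputable def tightRatio : ℝ :=
  sInf { x : ℝ | ∃ μ ν : Measure ℝ, IsProbabilityMeasure μ ∧ IsProbabilityMeasure ν ∧
    μ (Set.Iio 0) = 0 ∧ ν (Set.Iio 0) = 0 ∧
    Integrable (fun z : ℝ × ℝ => max z.1 z.2) (μ.prod ν) ∧
    0 < optWelfare μ ν ∧
    x = sSup { y : ℝ | ∃ p : ℝ, 0 ≤ p ∧ y = welfare μ ν p / optWelfare μ ν } }

noncomputable def wfn (p : ℝ) : ℝ × ℝ → ℝ :=
  fun z => z.1 + if z.1 ≤ p ∧ p ≤ z.2 then z.2 - z.1 else 0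

lemma welfare_def (μ ν : Measure ℝ) (p : ℝ) : welfare μ ν p = ∫ z, wfn p z ∂(μ.prod ν) := rfl

lemma meas_wfn (p : ℝ) : Measurable (wfn p) := by
  apply Measurable.add measurable_fst
  refine Measurable.ite ?_ (measurable_snd.sub measurable_fst) measurable_const
  exact (measurableSet_le measurable_fst measurable_const).inter
    (measurableSet_le measurable_const measurable_snd)

lemma meas_max : Measurable (fun z : ℝ × ℝ => max z.1 z.2) := measurable_fst.max measurable_snd

lemma ae_nn (μ ν : Measure ℝ) [SFinite μ] [SFinite ν]
    (hμ : μ (Set.Iio 0) = 0) (hν : ν (Set.Iio 0) = 0) :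
    ∀ᵐ z ∂(μ.prod ν), 0 ≤ z.1 ∧ 0 ≤ z.2 := by
  have h1 : ∀ᵐ z ∂(μ.prod ν), 0 ≤ z.1 := by
    rw [ae_iff]
    have : {z : ℝ × ℝ | ¬ 0 ≤ z.1} = Set.Iio 0 ×ˢ Set.univ := by
      ext z; simp [not_le, Set.mem_Iio]
    rw [this, Measure.prod_prod, hμ, zero_mul]
  have h2 : ∀ᵐ z ∂(μ.prod ν), 0 ≤ z.2 := by
    rw [ae_iff]
    have : {z : ℝ × ℝ | ¬ 0 ≤ z.2} = Set.univ ×ˢ Set.Iio 0 := by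
      ext z; simp [not_le, Set.mem_Iio]
    rw [this, Measure.prod_prod, hν, mul_zero]
  exact h1.and h2

lemma wfn_bounds {p : ℝ} {z : ℝ × ℝ} (h : 0 ≤ z.1 ∧ 0 ≤ z.2) :
    0 ≤ wfn p z ∧ wfn p z ≤ max z.1 z.2 := by
  unfold wfn
  split_ifs with hc
  · constructor
    · linarith [h.2]
    · have : z.1 + (z.2 - z.1) = z.2 := by ring
      rw [this]; exact le_max_right _ _
  · refine ⟨by simpa using h.1, ?_⟩
    simpa using le_max_left z.1 z.2

lemma integrable_wfn {μ ν : Measure ℝ} [SFinite μ] [SFinite ν]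
    (hμ : μ (Set.Iio 0) = 0) (hν : ν (Set.Iio 0) = 0)
    (hmax : Integrable (fun z : ℝ × ℝ => max z.1 z.2) (μ.prod ν)) (p : ℝ) :
    Integrable (wfn p) (μ.prod ν) := by
  refine hmax.mono (meas_wfn p).aestronglyMeasurable ?_
  filter_upwards [ae_nn μ ν hμ hν] with z hz
  have hb := wfn_bounds (p := p) hz
  rw [Real.norm_eq_abs, Real.norm_eq_abs, abs_of_nonneg hb.1,
    abs_of_nonneg (le_trans hb.1 hb.2)]
  exact hb.2

lemma welfare_nonneg {μ ν : Measure ℝ} [SFinite μ] [SFinite ν]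
    (hμ : μ (Set.Iio 0) = 0) (hν : ν (Set.Iio 0) = 0) (p : ℝ) :
    0 ≤ welfare μ ν p := by
  rw [welfare_def]
  refine integral_nonneg_of_ae ?_
  filter_upwards [ae_nn μ ν hμ hν] with z hz
  exact (wfn_bounds hz).1

lemma welfare_le_opt {μ ν : Measure ℝ} [SFinite μ] [SFinite ν]
    (hμ : μ (Set.Iio 0) = 0) (hν : ν (Set.Iio 0) = 0)
    (hmax : Integrable (fun z : ℝ × ℝ => max z.1 z.2) (μ.prod ν)) (p : ℝ) :
    welfare μ ν p ≤ optWelfare μ ν := by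
  rw [welfare_def, optWelfare]
  refine integral_mono_ae (integrable_wfn hμ hν hmax p) hmax ?_
  filter_upwards [ae_nn μ ν hμ hν] with z hz
  exact (wfn_bounds hz).2

lemma scale_iff {c x t : ℝ} (hc : 0 < c) : x / c ≤ t ↔ x ≤ c * t := by
  rw [div_le_iff₀ hc, mul_comm]

lemma scale_iff' {c y t : ℝ} (hc : 0 < c) : t ≤ y / c ↔ c * t ≤ y := by
  rw [le_div_iff₀ hc, mul_comm]

lemma welfare_map {μ ν : Measure ℝ} [SFinite μ] [SFinite ν] {c : ℝ} (hc : 0 < c) (t : ℝ) :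
    welfare (μ.map (fun x => x / c)) (ν.map (fun x => x / c)) t = welfare μ ν (c * t) / c := by
  have hf : Measurable (fun x : ℝ => x / c) := measurable_id.div_const c
  rw [welfare_def, Measure.map_prod_map _ _ hf hf,
    integral_map (hf.prodMap hf).aemeasurable (meas_wfn t).aestronglyMeasurable]
  have key : ∀ z : ℝ × ℝ, wfn t (Prod.map (fun x => x / c) (fun x => x / c) z)
      = wfn (c * t) z / c := by
    intro z
    show wfn t (z.1 / c, z.2 / c) = wfn (c * t) z / c
    unfold wfn
    simp only [scale_iff hc, scale_iff' hc]
    split_ifs with h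
    · field_simp
    · simp
  simp_rw [key]
  rw [integral_div, welfare_def]

lemma opt_map {μ ν : Measure ℝ} [SFinite μ] [SFinite ν] {c : ℝ} (hc : 0 < c) :
    optWelfare (μ.map (fun x => x / c)) (ν.map (fun x => x / c)) = optWelfare μ ν / c := by
  have hf : Measurable (fun x : ℝ => x / c) := measurable_id.div_const c
  rw [optWelfare, Measure.map_prod_map _ _ hf hf,
    integral_map (hf.prodMap hf).aemeasurable meas_max.aestronglyMeasurable]
  have key : ∀ z : ℝ × ℝ, max (Prod.map (fun x => x / c) (fun x => x / c) z).1
      (Prod.map (fun x => x / c) (fun x => x / c) z).2 = max z.1 z.2 / c := by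
    intro z
    exact max_div_div_right hc.le z.1 z.2
  simp_rw [key]
  rw [integral_div, optWelfare]

lemma map_Iio {μ : Measure ℝ} {c : ℝ} (hc : 0 < c) (hμ : μ (Set.Iio 0) = 0) :
    (μ.map (fun x => x / c)) (Set.Iio 0) = 0 := by
  have hf : Measurable (fun x : ℝ => x / c) := measurable_id.div_const c
  rw [Measure.map_apply hf measurableSet_Iio]
  have : (fun x : ℝ => x / c) ⁻¹' Set.Iio 0 = Set.Iio 0 := by
    ext x
    simp only [Set.mem_preimage, Set.mem_Iio]
    constructor
    · intro h
      by_contra hx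
      push_neg at hx
      exact absurd (div_nonneg hx hc.le) (not_le.mpr h)
    · intro h
      exact div_neg_of_neg_of_pos h hc
  rw [this, hμ]

lemma dirac_Iio : (Measure.dirac (1:ℝ)) (Set.Iio 0) = 0 := by
  rw [Measure.dirac_apply' _ measurableSet_Iio]
  simp

lemma welfare_dirac (t : ℝ) : welfare (Measure.dirac 1) (Measure.dirac 1) t = 1 := by
  rw [welfare_def, Measure.dirac_prod_dirac, integral_dirac]
  unfold wfn
  split_ifs <;> norm_num

lemma opt_dirac : optWelfare (Measure.dirac 1) (Measure.dirac 1) = 1 := by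
  rw [optWelfare, Measure.dirac_prod_dirac, integral_dirac]
  norm_num

lemma integrable_max_dirac :
    Integrable (fun z : ℝ × ℝ => max z.1 z.2) ((Measure.dirac (1:ℝ)).prod (Measure.dirac 1)) := by
  rw [Measure.dirac_prod_dirac]
  refine (integrable_const (1:ℝ)).congr ?_
  rw [Filter.EventuallyEq, MeasureTheory.ae_dirac_eq]
  simp

lemma bddAbove_S {μ ν : Measure ℝ} [SFinite μ] [SFinite ν]
    (hμ0 : μ (Set.Iio 0) = 0) (hν0 : ν (Set.Iio 0) = 0)
    (hint : Integrable (fun z : ℝ × ℝ => max z.1 z.2) (μ.prod ν))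
    (hopt : 0 < optWelfare μ ν) :
    BddAbove {y : ℝ | ∃ p : ℝ, 0 ≤ p ∧ y = welfare μ ν p / optWelfare μ ν} := by
  refine ⟨1, ?_⟩
  rintro y ⟨p, hp, rfl⟩
  exact (div_le_one hopt).mpr (welfare_le_opt hμ0 hν0 hint p)


/-- The value of `FullOp` equals the tight worst-case approximation ratio of
fixed-price mechanisms. -/
theorem stmt_2 : fullOpValue = tightRatio := by
  have hbddA : BddBelow { r : ℝ | ∃ μ ν : Measure ℝ, IsProbabilityMeasure μ ∧
      IsProbabilityMeasure ν ∧ μ (Set.Iio 0) = 0 ∧ ν (Set.Iio 0) = 0 ∧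
      1 ≤ optWelfare μ ν ∧ ∀ t : ℝ, 0 ≤ t → welfare μ ν t ≤ r } := by
    refine ⟨0, ?_⟩
    rintro r ⟨μ, ν, hμp, hνp, hμ0, hν0, _, hr⟩
    exact le_trans (welfare_nonneg hμ0 hν0 0) (hr 0 le_rfl)
  have hbddB : BddBelow { x : ℝ | ∃ μ ν : Measure ℝ, IsProbabilityMeasure μ ∧
      IsProbabilityMeasure ν ∧ μ (Set.Iio 0) = 0 ∧ ν (Set.Iio 0) = 0 ∧
      Integrable (fun z : ℝ × ℝ => max z.1 z.2) (μ.prod ν) ∧ 0 < optWelfare μ ν ∧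
      x = sSup { y : ℝ | ∃ p : ℝ, 0 ≤ p ∧ y = welfare μ ν p / optWelfare μ ν } } := by
    refine ⟨0, ?_⟩
    rintro x ⟨μ, ν, hμp, hνp, hμ0, hν0, hint, hopt, rfl⟩
    refine le_trans (div_nonneg (welfare_nonneg hμ0 hν0 0) hopt.le)
      (le_csSup (bddAbove_S hμ0 hν0 hint hopt) ⟨0, le_rfl, rfl⟩)
  unfold fullOpValue tightRatio
  apply le_antisymm
  · -- sInf A ≤ sInf B
    apply le_csInf
    · exact ⟨_, Measure.dirac 1, Measure.dirac 1, inferInstance, inferInstance, dirac_Iio,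
        dirac_Iio, integrable_max_dirac, by rw [opt_dirac]; norm_num, rfl⟩
    · rintro x ⟨μ, ν, hμp, hνp, hμ0, hν0, hint, hopt, rfl⟩
      apply csInf_le hbddA
      set c := optWelfare μ ν with hc
      have hf : Measurable (fun y : ℝ => y / c) := measurable_id.div_const c
      refine ⟨μ.map (fun y => y / c), ν.map (fun y => y / c),
        Measure.isProbabilityMeasure_map hf.aemeasurable, Measure.isProbabilityMeasure_map hf.aemeasurable,
        map_Iio hopt hμ0, map_Iio hopt hν0, ?_, ?_⟩
      · rw [opt_map hopt, ← hc, div_self hopt.ne']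
      · intro t ht
        rw [welfare_map hopt t]
        exact le_csSup (bddAbove_S hμ0 hν0 hint hopt)
          ⟨c * t, mul_nonneg hopt.le ht, rfl⟩
  · -- sInf B ≤ sInf A
    apply le_csInf
    · refine ⟨1, Measure.dirac 1, Measure.dirac 1, inferInstance, inferInstance, dirac_Iio,
        dirac_Iio, le_of_eq opt_dirac.symm, fun t _ => le_of_eq (welfare_dirac t)⟩
    · rintro r ⟨μ, ν, hμp, hνp, hμ0, hν0, hopt1, hr⟩
      have hint : Integrable (fun z : ℝ × ℝ => max z.1 z.2) (μ.prod ν) := by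
        by_contra h
        rw [optWelfare, integral_undef h] at hopt1
        linarith
      have hopt : 0 < optWelfare μ ν := lt_of_lt_of_le zero_lt_one hopt1
      refine le_trans (csInf_le hbddB
        ⟨μ, ν, hμp, hνp, hμ0, hν0, hint, hopt, rfl⟩) ?_
      refine csSup_le ⟨welfare μ ν 0 / optWelfare μ ν, 0, le_rfl, rfl⟩ ?_
      rintro y ⟨p, hp, rfl⟩
      exact le_trans (div_le_self (welfare_nonneg hμ0 hν0 p) hopt1) (hr p hp)
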